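/- (Correctness of rule [RED].) Let N₁ be the net with places {y, z} and transitions: a (labeled a) with Post(a,y)=1, Post(a,z)=1; b (labeled b) with Pre(b,y)=1, Pre(b,z)=1. Let N₂ be the net with single place y and transitions a (Post(a,y)=1), b (Pre(b,y)=1). With initial markings m₁(y)=K, m₁(z)=N where K ≤ N, and m₂(y)=K, we have (N₁, m₁) ▷_E (N₂, m₂) where E is the equation z = y + N − K. -/

import Mathlib

/-- A labeled Petri net over a global type `V` of variables/places and labels in
`L` (`none` is the silent label `τ`).  The net only uses the places in `places`:
the flow functions vanish outside of it. -/
structure LNet (V L : Type) where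
  T : Type
  places : Set V
  Pre : T → V → ℕ
  Post : T → V → ℕ
  pre_supp : ∀ t p, p ∉ places → Pre t p = 0
  post_supp : ∀ t p, p ∉ places → Post t p = 0
  label : T → Option L

namespace LNet

variable {V L : Type}

/-- Transition `t` is enabled at marking `m`. -/
def Enabled (N : LNet V L) (m : V → ℕ) (t : N.T) : Prop :=
  ∀ p, N.Pre t p ≤ m p

/-- `m →t m'` : `t` is enabled at `m` and `m' = m - Pre(t) + Post(t)` (pointwise). -/
def Fire (N : LNet V L) (m : V → ℕ) (t : N.T) (m' : V → ℕ) : Prop :=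
  N.Enabled m t ∧ ∀ p, m' p = m p - N.Pre t p + N.Post t p

/-- `m ⇒ρ m'` : the firing sequence `ρ` fires from `m` to `m'`. -/
def FireSeq (N : LNet V L) : (V → ℕ) → List N.T → (V → ℕ) → Prop
  | m, [], m' => m' = m
  | m, t :: ρ, m'' => ∃ m', N.Fire m t m' ∧ N.FireSeq m' ρ m''

/-- Reachability from `m₀`. -/
def Reach (N : LNet V L) (m₀ m : V → ℕ) : Prop :=
  ∃ ρ, N.FireSeq m₀ ρ m

/-- The observation sequence of a firing sequence (silent transitions erased). -/
def Obs (N : LNet V L) (ρ : List N.T) : List L :=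
  ρ.filterMap N.label

end LNet

/-- `m₁ ⊎ m₂ ⊨ E` : the two markings are compatible and, jointly, satisfy the
constraint system `E` (i.e. `E ∧ m̲₁ ∧ m̲₂` is satisfiable: some valuation of all
the variables agrees with `m₁` on `P₁`, with `m₂` on `P₂` and satisfies `E`). -/
def JSat {V L : Type} (N₁ N₂ : LNet V L) (E : (V → ℕ) → Prop)
    (m₁ m₂ : V → ℕ) : Prop :=
  ∃ v : V → ℕ, (∀ p ∈ N₁.places, v p = m₁ p) ∧ (∀ p ∈ N₂.places, v p = m₂ p) ∧ E v

/-- `(N₁, m₁) ⊒_E (N₂, m₂)` : `(N₂, m₂)` is an `E`-abstraction of `(N₁, m₁)`,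
conditions (A1) and (A2). -/
def EAbs {V L : Type} (N₁ : LNet V L) (m₁ : V → ℕ) (N₂ : LNet V L) (m₂ : V → ℕ)
    (E : (V → ℕ) → Prop) : Prop :=
  -- (A1) the initial markings jointly satisfy `E`
  JSat N₁ N₂ E m₁ m₂ ∧
  -- (A2)
  ∀ ρ₁ m₁', N₁.FireSeq m₁ ρ₁ m₁' →
    (∃ m₂' : V → ℕ, JSat N₁ N₂ E m₁' m₂') ∧
    ∀ m₂' : V → ℕ, JSat N₁ N₂ E m₁' m₂' →
      ∃ ρ₂ m₂'', N₂.FireSeq m₂ ρ₂ m₂'' ∧ (∀ p ∈ N₂.places, m₂'' p = m₂' p) ∧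
        N₁.Obs ρ₁ = N₂.Obs ρ₂

/-- `(N₁, m₁) ▷_E (N₂, m₂)` : `E`-abstraction equivalence (abstraction in both
directions). -/
def EEquiv {V L : Type} (N₁ : LNet V L) (m₁ : V → ℕ) (N₂ : LNet V L) (m₂ : V → ℕ)
    (E : (V → ℕ) → Prop) : Prop :=
  EAbs N₁ m₁ N₂ m₂ E ∧ EAbs N₂ m₂ N₁ m₁ E

/-- `F` is a formula whose (free) variables all belong to `S`: its truth value
only depends on the values of the variables in `S`. -/
def FormulaDependsOn {V : Type} (F : (V → ℕ) → Prop) (S : Set V) : Prop :=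
  ∀ v w : V → ℕ, (∀ x ∈ S, v x = w x) → (F v ↔ F w)

/-! Rule [RED].  Variables: `0 = y`, `1 = z`.  Labels: `0 = a`, `1 = b`.
Both nets have transitions `0 = a`, `1 = b`. -/

/-- The initial net of rule [RED], with places `{y, z}`: `a` adds one token to
each of `y` and `z`, `b` removes one token from each. -/
def Nred₁ : LNet (Fin 2) (Fin 2) where
  T := Fin 2
  places := Set.univ
  Pre := ![![0, 0], ![1, 1]]
  Post := ![![1, 1], ![0, 0]]
  pre_supp := by intro t p hp; exact absurd (Set.mem_univ p) hp
  post_supp := by intro t p hp; exact absurd (Set.mem_univ p) hp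
  label := ![some 0, some 1]

/-- The reduced net of rule [RED], with single place `y`. -/
def Nred₂ : LNet (Fin 2) (Fin 2) where
  T := Fin 2
  places := {p | p.val = 0}
  Pre := ![![0, 0], ![1, 0]]
  Post := ![![1, 0], ![0, 0]]
  pre_supp := by
    intro t p hp
    simp only [Set.mem_setOf_eq] at hp
    have h2 := p.isLt
    have hp1 : p = 1 := Fin.ext (by omega)
    subst hp1
    fin_cases t <;> rfl
  post_supp := by
    intro t p hp
    simp only [Set.mem_setOf_eq] at hp
    have h2 := p.isLt
    have hp1 : p = 1 := Fin.ext (by omega)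
    subst hp1
    fin_cases t <;> rfl
  label := ![some 0, some 1]

section Aux

def tr₁ : Fin 2 → Nred₁.T := fun i => i
def tr₂ : Fin 2 → Nred₂.T := fun i => i

lemma obs_eq' (ρ : List (Fin 2)) : Nred₁.Obs ρ = Nred₂.Obs ρ := rfl

lemma fire₂_a (n : Fin 2 → ℕ) : Nred₂.Fire n (tr₂ 0) ![n 0 + 1, n 1] := by
  refine ⟨fun p => ?_, fun p => ?_⟩ <;> fin_cases p <;>
    simp [Nred₂, tr₂, LNet.Enabled]

lemma fire₂_b (n : Fin 2 → ℕ) (h : 1 ≤ n 0) : Nred₂.Fire n (tr₂ 1) ![n 0 - 1, n 1] := by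
  refine ⟨fun p => ?_, fun p => ?_⟩ <;> fin_cases p <;>
    simp [Nred₂, tr₂, LNet.Enabled, h]

lemma fire₁_a (n : Fin 2 → ℕ) : Nred₁.Fire n (tr₁ 0) ![n 0 + 1, n 1 + 1] := by
  refine ⟨fun p => ?_, fun p => ?_⟩ <;> fin_cases p <;>
    simp [Nred₁, tr₁, LNet.Enabled]

lemma fire₁_b (n : Fin 2 → ℕ) (h : 1 ≤ n 0) (h' : 1 ≤ n 1) :
    Nred₁.Fire n (tr₁ 1) ![n 0 - 1, n 1 - 1] := by
  refine ⟨fun p => ?_, fun p => ?_⟩ <;> fin_cases p <;>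
    simp [Nred₁, tr₁, LNet.Enabled, h, h']

lemma fire₁_dest (m mid : Fin 2 → ℕ) (t : Fin 2) (h : Nred₁.Fire m t mid) :
    (t = 0 ∧ mid 0 = m 0 + 1 ∧ mid 1 = m 1 + 1) ∨
    (t = 1 ∧ 1 ≤ m 0 ∧ 1 ≤ m 1 ∧ mid 0 = m 0 - 1 ∧ mid 1 = m 1 - 1) := by
  obtain ⟨he, hm⟩ := h
  fin_cases t
  · left
    refine ⟨rfl, ?_, ?_⟩ <;> exact hm _
  · right
    have h0 := he 0
    have h1 := he 1
    have hm0 := hm 0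
    have hm1 := hm 1
    simp [Nred₁, tr₁, LNet.Enabled] at h0 h1 hm0 hm1
    exact ⟨rfl, h0, h1, hm0, hm1⟩

lemma fire₂_dest (m mid : Fin 2 → ℕ) (t : Fin 2) (h : Nred₂.Fire m t mid) :
    (t = 0 ∧ mid 0 = m 0 + 1) ∨ (t = 1 ∧ 1 ≤ m 0 ∧ mid 0 = m 0 - 1) := by
  obtain ⟨he, hm⟩ := h
  fin_cases t
  · left
    refine ⟨rfl, ?_⟩
    simpa [Nred₂] using hm 0
  · right
    have h0 := he 0
    have hm0 := hm 0
    simp [Nred₂, tr₂, LNet.Enabled] at h0 hm0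
    exact ⟨rfl, h0, hm0⟩

lemma key₁ (c : ℕ) : ∀ (ρ : List (Fin 2)) (m n m' : Fin 2 → ℕ),
    m 1 = m 0 + c → n 0 = m 0 → Nred₁.FireSeq m ρ m' →
    ∃ n', Nred₂.FireSeq n ρ n' ∧ n' 0 = m' 0 ∧ m' 1 = m' 0 + c := by
  intro ρ
  induction ρ with
  | nil =>
    intro m n m' hinv hn h
    cases h
    exact ⟨n, rfl, hn, hinv⟩
  | cons t ρ ih =>
    rintro m n m' hinv hn ⟨mid, hf, hseq⟩
    rcases fire₁_dest m mid t hf with ⟨rfl, e0, e1⟩ | ⟨rfl, g0, g1, e0, e1⟩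
    · obtain ⟨n', hs, hn', hinv'⟩ :=
        ih mid ![n 0 + 1, n 1] m' (by omega) (by simp; omega) hseq
      exact ⟨n', ⟨_, fire₂_a n, hs⟩, hn', hinv'⟩
    · obtain ⟨n', hs, hn', hinv'⟩ :=
        ih mid ![n 0 - 1, n 1] m' (by omega) (by simp; omega) hseq
      exact ⟨n', ⟨_, fire₂_b n (by omega), hs⟩, hn', hinv'⟩

lemma key₂ (c : ℕ) : ∀ (ρ : List (Fin 2)) (n m n' : Fin 2 → ℕ),
    m 1 = m 0 + c → m 0 = n 0 → Nred₂.FireSeq n ρ n' →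
    ∃ m', Nred₁.FireSeq m ρ m' ∧ m' 0 = n' 0 ∧ m' 1 = m' 0 + c := by
  intro ρ
  induction ρ with
  | nil =>
    intro n m n' hinv hn h
    cases h
    exact ⟨m, rfl, hn, hinv⟩
  | cons t ρ ih =>
    rintro n m n' hinv hn ⟨mid, hf, hseq⟩
    rcases fire₂_dest n mid t hf with ⟨rfl, e0⟩ | ⟨rfl, g0, e0⟩
    · obtain ⟨m', hs, hm', hinv'⟩ :=
        ih mid ![m 0 + 1, m 1 + 1] n' (by simp; omega) (by simp; omega) hseq
      exact ⟨m', ⟨_, fire₁_a m, hs⟩, hm', hinv'⟩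
    · obtain ⟨m', hs, hm', hinv'⟩ :=
        ih mid ![m 0 - 1, m 1 - 1] n' (by simp; omega) (by simp; omega) hseq
      exact ⟨m', ⟨_, fire₁_b m (by omega) (by omega), hs⟩, hm', hinv'⟩

end Aux

/-- (Correctness of rule [RED].)  With initial markings `m₁(y) = K`,
`m₁(z) = N` where `K ≤ N`, and `m₂(y) = K`, we have `(N₁, m₁) ▷_E (N₂, m₂)`
where `E` is the equation `z = y + N − K`. -/
theorem red_correct (K N : ℕ) (hKN : K ≤ N) (m₁ m₂ : Fin 2 → ℕ)
    (h₁ : m₁ 0 = K) (h₂ : m₁ 1 = N) (h₃ : m₂ 0 = K) :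
    EEquiv Nred₁ m₁ Nred₂ m₂ (fun v => v 1 = v 0 + (N - K)) := by
  have mem₂ : ∀ p : Fin 2, p ∈ Nred₂.places → p = 0 := fun p hp => Fin.ext hp
  have hinv : m₁ 1 = m₁ 0 + (N - K) := by omega
  constructor
  · constructor
    · exact ⟨m₁, fun p _ => rfl, fun p hp => by rw [mem₂ p hp]; omega, hinv⟩
    · intro ρ₁ m₁' hseq
      obtain ⟨n', hs, hn', hinv'⟩ :=
        key₁ (N - K) ρ₁ m₁ m₂ m₁' hinv (by omega) hseq
      refine ⟨⟨m₁', m₁', fun p _ => rfl, fun p hp => by rw [mem₂ p hp], hinv'⟩, ?_⟩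
      rintro m₂' ⟨v, hv1, hv2, hvE⟩
      refine ⟨ρ₁, n', hs, fun p hp => ?_, obs_eq' ρ₁⟩
      rw [mem₂ p hp]
      rw [hn', ← hv1 0 (Set.mem_univ 0), hv2 0 (by exact rfl)]
  · constructor
    · exact ⟨m₁, fun p hp => by rw [mem₂ p hp]; omega, fun p _ => rfl, hinv⟩
    · intro ρ₂ n' hseq
      obtain ⟨m', hs, hm', hinv'⟩ :=
        key₂ (N - K) ρ₂ m₂ m₁ n' hinv (by omega) hseq
      refine ⟨⟨m', m', fun p hp => by rw [mem₂ p hp, hm'], fun p _ => rfl, hinv'⟩, ?_⟩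
      rintro m₁' ⟨v, hv1, hv2, hvE⟩
      have e0 : m₁' 0 = n' 0 := by
        rw [← hv2 0 (Set.mem_univ 0), hv1 0 (by exact rfl)]
      have e1 : m₁' 1 = m₁' 0 + (N - K) := by
        rw [← hv2 0 (Set.mem_univ 0), ← hv2 1 (Set.mem_univ 1)]; exact hvE
      refine ⟨ρ₂, m', hs, fun p _ => ?_, (obs_eq' ρ₂).symm⟩
      fin_cases p
      · show m' 0 = m₁' 0; omega
      · show m' 1 = m₁' 1; omega
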